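/- Let k be an algebraically closed field of characteristic 2, σ the automorphism of SL₃(k) given by σ(g) = J·(gᵀ)⁻¹·J with J the 3×3 antidiagonal permutation matrix, G := SL₃(k) ⋊ ⟨σ⟩, and for x ∈ k set ε(x) := I₃ + x·E₁₃ ∈ SL₃(k). Then for every a, b ∈ k there exists g ∈ G such that g·(ε(a), σ)·g⁻¹ = (ε(b), σ) and g·(ε(1), 1)·g⁻¹ = (ε(1), 1), where (n, h) denotes the element of the semidirect product with normal part n ∈ SL₃(k) and automorphism part h ∈ ⟨σ⟩. (Explicitly, one may take g = (ε_α(x)·ε_β(x), 1) with x² = a + b, ε_α(x) = I₃ + x·E₁₂, ε_β(x) = I₃ + x·E₂₃.) -/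

import Mathlib

set_option linter.unusedSectionVars false

open Matrix

noncomputable section

/-- `SL₃(k)`. -/
abbrev SL3 (k : Type*) [Field k] := Matrix.SpecialLinearGroup (Fin 3) k

/-- The 3×3 antidiagonal permutation matrix `J`. -/
def Jmat (k : Type*) [Field k] : Matrix (Fin 3) (Fin 3) k := !![0,0,1;0,1,0;1,0,0]

lemma Jmat_mul_Jmat (k : Type*) [Field k] : Jmat k * Jmat k = 1 := by
  ext i j
  fin_cases i <;> fin_cases j <;>
    simp [Jmat, Matrix.mul_apply, Fin.sum_univ_succ, Matrix.one_apply]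

lemma Jmat_det (k : Type*) [Field k] [CharP k 2] : (Jmat k).det = 1 := by
  simp [Jmat, Matrix.det_fin_three, CharTwo.neg_eq]

variable (k : Type*) [Field k] [CharP k 2]

/-- `J` as an element of `SL₃(k)` (its determinant is `-1 = 1` in characteristic two). -/
def JSL : SL3 k := ⟨Jmat k, Jmat_det k⟩

lemma JSL_mul_JSL : JSL k * JSL k = 1 := Subtype.ext (by
  exact Jmat_mul_Jmat k)

/-- Transpose, as a map `SL₃(k) → SL₃(k)`. -/
def TSL (g : SL3 k) : SL3 k :=
  ⟨(g : Matrix (Fin 3) (Fin 3) k)ᵀ, by simp⟩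

lemma TSL_mul (g h : SL3 k) : TSL k (g * h) = TSL k h * TSL k g :=
  Subtype.ext (by simp [TSL, Matrix.transpose_mul]; rfl)

lemma TSL_inv (g : SL3 k) : TSL k g⁻¹ = (TSL k g)⁻¹ :=
  Subtype.ext (by
    simp [TSL, Matrix.SpecialLinearGroup.coe_inv, Matrix.adjugate_transpose]; rfl)

lemma TSL_TSL (g : SL3 k) : TSL k (TSL k g) = g := Subtype.ext (by simp [TSL])

/-- The automorphism `g ↦ (gᵀ)⁻¹` of `SL₃(k)`. -/
def transposeInvAut : MulAut (SL3 k) :=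
{ toFun := fun g => TSL k g⁻¹
  invFun := fun g => TSL k g⁻¹
  left_inv := fun g => by
    show TSL k (TSL k g⁻¹)⁻¹ = g
    simp only [TSL_inv, TSL_TSL, inv_inv]
  right_inv := fun g => by
    show TSL k (TSL k g⁻¹)⁻¹ = g
    simp only [TSL_inv, TSL_TSL, inv_inv]
  map_mul' := fun g h => by
    show TSL k (g * h)⁻¹ = TSL k g⁻¹ * TSL k h⁻¹
    rw [_root_.mul_inv_rev, TSL_mul] }

/-- The order-2 (graph) automorphism `σ` of `SL₃(k)` given by `σ(g) = J ⬝ (gᵀ)⁻¹ ⬝ J`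
(recall that `J⁻¹ = J`). -/
def sigmaAut : MulAut (SL3 k) :=
  (transposeInvAut k).trans (MulAut.conj (JSL k))

/-- The unipotent element `ε(x) = I₃ + x·E₁₃` of `SL₃(k)`. -/
def eps (x : k) : SL3 k :=
  ⟨!![1,0,x;0,1,0;0,0,1], by simp [Matrix.det_fin_three]⟩

/-- The non-connected reductive group `G = SL₃(k) ⋊ ⟨σ⟩`. -/
abbrev Ghat := SL3 k ⋊[(Subgroup.zpowers (sigmaAut k)).subtype] (Subgroup.zpowers (sigmaAut k))

/-- `σ` as an element of the subgroup `⟨σ⟩` of `Aut(SL₃(k))`. -/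
def sigEl : Subgroup.zpowers (sigmaAut k) := ⟨sigmaAut k, Subgroup.mem_zpowers _⟩

end

noncomputable section

variable (k : Type*) [Field k] [CharP k 2]

/-- The auxiliary unipotent element `u(x) = ε_α(x) ε_β(x)`. -/
def uel (x : k) : SL3 k :=
  ⟨!![1,x,x^2;0,1,x;0,0,1], by
    simp [Matrix.det_fin_three]⟩

lemma JSL_inv : (JSL k)⁻¹ = JSL k :=
  inv_eq_of_mul_eq_one_right (JSL_mul_JSL k)

lemma sigma_uel (x : k) : sigmaAut k (uel k x)⁻¹ = uel k x := by
  show MulAut.conj (JSL k) (transposeInvAut k (uel k x)⁻¹) = uel k x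
  have h1 : transposeInvAut k (uel k x)⁻¹ = TSL k (uel k x) := by
    show TSL k ((uel k x)⁻¹)⁻¹ = TSL k (uel k x)
    rw [inv_inv]
  rw [h1, MulAut.conj_apply, JSL_inv]
  apply Subtype.ext
  show (Jmat k) * ((uel k x : Matrix (Fin 3) (Fin 3) k)ᵀ) * (Jmat k)
      = (uel k x : Matrix (Fin 3) (Fin 3) k)
  ext i j
  fin_cases i <;> fin_cases j <;>
    simp [Jmat, uel, Matrix.mul_apply, Fin.sum_univ_succ, Matrix.vecHead, Matrix.vecTail,
      Matrix.vecMul, dotProduct]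

lemma uel_comm_eps (x c : k) : uel k x * eps k c = eps k c * uel k x := by
  apply Subtype.ext
  show (uel k x : Matrix (Fin 3) (Fin 3) k) * (eps k c) = (eps k c : Matrix (Fin 3) (Fin 3) k) * (uel k x)
  ext i j
  fin_cases i <;> fin_cases j <;>
    simp [uel, eps, Matrix.mul_apply, Fin.sum_univ_succ, Matrix.vecHead, Matrix.vecTail] <;> ring

lemma uel_eps_uel (x c : k) : uel k x * eps k c * uel k x = eps k (c + x^2) := by
  have h2 : (2 : k) = 0 := by exact_mod_cast CharP.cast_eq_zero k 2
  apply Subtype.ext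
  show (uel k x : Matrix (Fin 3) (Fin 3) k) * (eps k c) * (uel k x)
      = (eps k (c + x^2) : Matrix (Fin 3) (Fin 3) k)
  ext i j
  fin_cases i <;> fin_cases j <;>
    simp [uel, eps, Matrix.mul_apply, Fin.sum_univ_succ, Matrix.vecHead, Matrix.vecTail] <;>
    first
      | linear_combination x * h2
      | linear_combination x ^ 2 * h2
      | ring

end

/-- For every `a b : k` the pairs `((ε a, σ), (ε 1, 1))` and `((ε b, σ), (ε 1, 1))` are conjugate
in `G = SL₃(k) ⋊ ⟨σ⟩`: the restrictions `ρₐ|_{Γ₂}` are pairwise conjugate. -/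
theorem stmt_1 (k : Type*) [Field k] [IsAlgClosed k] [CharP k 2] (a b : k) :
    ∃ g : Ghat k,
      g * ⟨eps k a, sigEl k⟩ * g⁻¹ = ⟨eps k b, sigEl k⟩ ∧
      g * ⟨eps k 1, 1⟩ * g⁻¹ = ⟨eps k 1, 1⟩ := by
  obtain ⟨x, hx⟩ := IsAlgClosed.exists_pow_nat_eq (a + b) (n := 2) (by norm_num)
  have hb : a + x ^ 2 = b := by
    rw [hx, ← add_assoc, CharTwo.add_self_eq_zero, zero_add]
  refine ⟨⟨uel k x, 1⟩, ?_, ?_⟩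
  · refine SemidirectProduct.ext ?_ ?_
    · show uel k x * eps k a * (sigmaAut k) ((uel k x)⁻¹) = eps k b
      rw [sigma_uel, (uel_eps_uel k x a).trans (by rw [hb])]
    · show (1 : Subgroup.zpowers (sigmaAut k)) * sigEl k * 1⁻¹ = sigEl k
      group
  · refine SemidirectProduct.ext ?_ ?_
    · show uel k x * eps k 1 * (uel k x)⁻¹ = eps k 1
      rw [uel_comm_eps, mul_assoc, mul_inv_cancel, mul_one]
    · show (1 : Subgroup.zpowers (sigmaAut k)) * 1 * 1⁻¹ = 1
      group
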